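/- Let ε ∈ {1, −1}, c ∈ ℝ, and k ∈ ℕ. Then the complex Gaussian integral ∫_{ℝ²} (x + iy)^k · exp(−2π(x² + y²) − 2πεic·(2x)) · 2 dx dy equals (−εic)^k · exp(−2πc²). In other words, with z = x + iy, d_ℂz = 2dxdy, and ψ_ε(z) = exp(2πεi(z + z̄)), one has ∫_ℂ z^k e^{−2π|z|²} ψ_{−ε}(cz) d_ℂz = (−εic)^k e^{−2πc²}. -/

import Mathlib

open MeasureTheory Complex Filter Real Finset

noncomputable def phi17 (a : ℂ) (x : ℝ) : ℂ := Complex.exp ((-(2 * (π:ℂ))) * (x:ℂ)^2 + a * x)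

lemma phi17_hasDerivAt (a : ℂ) (x : ℝ) :
    HasDerivAt (phi17 a) ((-(4 * (π:ℂ)) * x + a) * phi17 a x) x := by
  have h : HasDerivAt (fun z : ℂ => Complex.exp ((-(2 * (π:ℂ))) * z^2 + a * z))
      ((-(4 * (π:ℂ)) * (x:ℂ) + a) * Complex.exp ((-(2 * (π:ℂ))) * (x:ℂ)^2 + a * (x:ℂ))) (x:ℂ) := by
    have h1 : HasDerivAt (fun z : ℂ => (-(2 * (π:ℂ))) * z^2 + a * z)
        ((-(4 * (π:ℂ)) * (x:ℂ) + a)) (x:ℂ) := by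
      have := (((hasDerivAt_pow 2 (x:ℂ)).const_mul (-(2 * (π:ℂ)))).add
        ((hasDerivAt_id (x:ℂ)).const_mul a))
      refine this.congr_deriv ?_
      ring
    have h2 := h1.cexp
    refine h2.congr_deriv ?_
    ring
  exact h.comp_ofReal

lemma integrable_pow_phi17 (j : ℕ) (a : ℂ) :
    Integrable fun x : ℝ => (x:ℂ)^j * phi17 a x := by
  have h1 : Integrable (fun x : ℝ => x ^ j * Real.exp (-π * x^2)) := by
    have := integrable_rpow_mul_exp_neg_mul_sq (b := π) pi_pos (s := j)
      (by
        have : (0:ℝ) ≤ j := Nat.cast_nonneg j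
        linarith)
    simpa [Real.rpow_natCast] using this
  refine ((h1.norm).const_mul (Real.exp (a.re^2 / (4*π)))).mono' ?_ ?_
  · apply Continuous.aestronglyMeasurable
    unfold phi17; fun_prop
  · filter_upwards with x
    have hnorm : ‖(x:ℂ)^j * phi17 a x‖ = |x|^j * Real.exp (-(2*π) * x^2 + a.re * x) := by
      unfold phi17
      rw [norm_mul, norm_pow, Complex.norm_exp, Complex.norm_real, Real.norm_eq_abs]
      norm_num [Complex.add_re, Complex.mul_re, ← Complex.ofReal_pow]
    rw [hnorm]
    have hb : -(2*π) * x^2 + a.re * x ≤ a.re^2/(4*π) + (-π * x^2) := by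
      have h4 : (0:ℝ) < 4*π := by positivity
      rw [div_add' _ _ _ (ne_of_gt h4), le_div_iff₀ h4]
      nlinarith [sq_nonneg (a.re - 2*π*x)]
    calc |x|^j * Real.exp (-(2*π) * x^2 + a.re * x)
        ≤ |x|^j * Real.exp (a.re^2/(4*π) + (-π * x^2)) := by
          gcongr
      _ = Real.exp (a.re^2/(4*π)) * ‖x^j * Real.exp (-π * x^2)‖ := by
          rw [Real.exp_add, norm_mul, norm_pow, Real.norm_eq_abs, Real.norm_eq_abs,
            Real.abs_exp]
          ring

lemma int_x17 (y : ℝ) (k j : ℕ) (a : ℂ) :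
    Integrable fun x : ℝ => ((x:ℂ) + y*Complex.I)^k * ((x:ℂ)^j * phi17 a x) := by
  have h : ∀ x : ℝ, ((x:ℂ) + y*Complex.I)^k * ((x:ℂ)^j * phi17 a x)
      = ∑ m ∈ Finset.range (k+1),
          (((y:ℂ)*Complex.I)^(k-m) * ((k.choose m : ℕ) : ℂ)) * ((x:ℂ)^(m+j) * phi17 a x) := by
    intro x
    rw [add_pow, Finset.sum_mul]
    refine Finset.sum_congr rfl fun m _ => ?_
    rw [pow_add]
    ring
  have h2 : Integrable (fun x : ℝ => ∑ m ∈ Finset.range (k+1),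
      (((y:ℂ)*Complex.I)^(k-m) * ((k.choose m : ℕ) : ℂ)) * ((x:ℂ)^(m+j) * phi17 a x)) :=
    integrable_finset_sum _ fun m _ => (integrable_pow_phi17 (m+j) a).const_mul _
  exact h2.congr (Filter.Eventually.of_forall fun x => (h x).symm)

lemma int_y17 (x : ℝ) (k j : ℕ) (a : ℂ) :
    Integrable fun y : ℝ => ((x:ℂ) + y*Complex.I)^k * ((y:ℂ)^j * phi17 a y) := by
  have h : ∀ y : ℝ, ((x:ℂ) + y*Complex.I)^k * ((y:ℂ)^j * phi17 a y)
      = ∑ m ∈ Finset.range (k+1),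
          ((x:ℂ)^m * Complex.I^(k-m) * ((k.choose m : ℕ) : ℂ)) * ((y:ℂ)^((k-m)+j) * phi17 a y) := by
    intro y
    rw [add_pow, Finset.sum_mul]
    refine Finset.sum_congr rfl fun m _ => ?_
    rw [pow_add, mul_pow]
    ring
  have h2 : Integrable (fun y : ℝ => ∑ m ∈ Finset.range (k+1),
      ((x:ℂ)^m * Complex.I^(k-m) * ((k.choose m : ℕ) : ℂ)) * ((y:ℂ)^((k-m)+j) * phi17 a y)) :=
    integrable_finset_sum _ fun m _ => (integrable_pow_phi17 ((k-m)+j) a).const_mul _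
  exact h2.congr (Filter.Eventually.of_forall fun y => (h y).symm)

lemma ibp_x17 (w : ℂ) (y : ℝ) (k : ℕ) :
    ∫ x : ℝ, ((x:ℂ) + y*Complex.I)^k * ((-(4*(π:ℂ))*x + w) * phi17 w x)
      = -((k:ℂ) * ∫ x : ℝ, ((x:ℂ) + y*Complex.I)^(k-1) * phi17 w x) := by
  have hu : ∀ x : ℝ, HasDerivAt (fun x : ℝ => ((x:ℂ) + y*Complex.I)^k)
      ((k:ℂ) * ((x:ℂ) + y*Complex.I)^(k-1)) x := by
    intro x
    have h0 : HasDerivAt (fun z : ℂ => (z + y*Complex.I)^k)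
        ((k:ℂ) * ((x:ℂ) + y*Complex.I)^(k-1)) (x:ℂ) := by
      simpa using ((hasDerivAt_id (x:ℂ)).add_const ((y:ℂ)*Complex.I)).fun_pow k
    exact h0.comp_ofReal
  have hv := fun x => phi17_hasDerivAt w x
  have huv' : Integrable (fun x : ℝ =>
      ((x:ℂ) + y*Complex.I)^k * ((-(4*(π:ℂ))*x + w) * phi17 w x)) := by
    have e : (fun x : ℝ => ((x:ℂ) + y*Complex.I)^k * ((-(4*(π:ℂ))*x + w) * phi17 w x))
        = fun x : ℝ => (-(4*(π:ℂ))) * (((x:ℂ) + y*Complex.I)^k * ((x:ℂ)^1 * phi17 w x))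
          + w * (((x:ℂ) + y*Complex.I)^k * ((x:ℂ)^0 * phi17 w x)) := by
      funext x; ring
    rw [e]
    exact ((int_x17 y k 1 w).const_mul _).add ((int_x17 y k 0 w).const_mul _)
  have hu'v : Integrable (fun x : ℝ =>
      ((k:ℂ) * ((x:ℂ) + y*Complex.I)^(k-1)) * phi17 w x) := by
    have e : (fun x : ℝ => ((k:ℂ) * ((x:ℂ) + y*Complex.I)^(k-1)) * phi17 w x)
        = fun x : ℝ => (k:ℂ) * (((x:ℂ) + y*Complex.I)^(k-1) * ((x:ℂ)^0 * phi17 w x)) := by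
      funext x; ring
    rw [e]
    exact (int_x17 y (k-1) 0 w).const_mul _
  have huv : Integrable (fun x : ℝ => ((x:ℂ) + y*Complex.I)^k * phi17 w x) := by
    have e : (fun x : ℝ => ((x:ℂ) + y*Complex.I)^k * phi17 w x)
        = fun x : ℝ => ((x:ℂ) + y*Complex.I)^k * ((x:ℂ)^0 * phi17 w x) := by
      funext x; ring
    rw [e]; exact int_x17 y k 0 w
  have h := integral_mul_deriv_eq_deriv_mul_of_integrable (fun x _ => hu x) (fun x _ => hv x) huv' hu'v huv
  rw [h]
  rw [← MeasureTheory.integral_const_mul]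
  congr 1
  refine integral_congr_ae (Filter.Eventually.of_forall fun x => ?_)
  ring

lemma ibp_y17 (x : ℝ) (k : ℕ) :
    ∫ y : ℝ, ((x:ℂ) + y*Complex.I)^k * ((-(4*(π:ℂ))*y + 0) * phi17 0 y)
      = -((k:ℂ) * Complex.I * ∫ y : ℝ, ((x:ℂ) + y*Complex.I)^(k-1) * phi17 0 y) := by
  have hu : ∀ y : ℝ, HasDerivAt (fun y : ℝ => ((x:ℂ) + y*Complex.I)^k)
      ((k:ℂ) * ((x:ℂ) + y*Complex.I)^(k-1) * Complex.I) y := by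
    intro y
    have h0 : HasDerivAt (fun z : ℂ => ((x:ℂ) + z*Complex.I)^k)
        ((k:ℂ) * ((x:ℂ) + y*Complex.I)^(k-1) * Complex.I) (y:ℂ) := by
      have h1 : HasDerivAt (fun z : ℂ => (x:ℂ) + z*Complex.I) Complex.I (y:ℂ) := by
        simpa using ((hasDerivAt_id ((y:ℝ):ℂ)).mul_const Complex.I).const_add (x:ℂ)
      simpa using h1.fun_pow k
    exact h0.comp_ofReal
  have hv := fun y => phi17_hasDerivAt 0 y
  have huv' : Integrable (fun y : ℝ =>
      ((x:ℂ) + y*Complex.I)^k * ((-(4*(π:ℂ))*y + 0) * phi17 0 y)) := by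
    have e : (fun y : ℝ => ((x:ℂ) + y*Complex.I)^k * ((-(4*(π:ℂ))*y + 0) * phi17 0 y))
        = fun y : ℝ => (-(4*(π:ℂ))) * (((x:ℂ) + y*Complex.I)^k * ((y:ℂ)^1 * phi17 0 y)) := by
      funext y; ring
    rw [e]
    exact (int_y17 x k 1 0).const_mul _
  have hu'v : Integrable (fun y : ℝ =>
      ((k:ℂ) * ((x:ℂ) + y*Complex.I)^(k-1) * Complex.I) * phi17 0 y) := by
    have e : (fun y : ℝ => ((k:ℂ) * ((x:ℂ) + y*Complex.I)^(k-1) * Complex.I) * phi17 0 y)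
        = fun y : ℝ => ((k:ℂ) * Complex.I) * (((x:ℂ) + y*Complex.I)^(k-1) * ((y:ℂ)^0 * phi17 0 y)) := by
      funext y; ring
    rw [e]
    exact (int_y17 x (k-1) 0 0).const_mul _
  have huv : Integrable (fun y : ℝ => ((x:ℂ) + y*Complex.I)^k * phi17 0 y) := by
    have e : (fun y : ℝ => ((x:ℂ) + y*Complex.I)^k * phi17 0 y)
        = fun y : ℝ => ((x:ℂ) + y*Complex.I)^k * ((y:ℂ)^0 * phi17 0 y) := by
      funext y; ring
    rw [e]; exact int_y17 x k 0 0
  have h := integral_mul_deriv_eq_deriv_mul_of_integrable (fun x _ => hu x) (fun x _ => hv x) huv' hu'v huv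
  rw [h]
  rw [← MeasureTheory.integral_const_mul]
  congr 1
  refine integral_congr_ae (Filter.Eventually.of_forall fun y => ?_)
  ring

lemma integral_phi17 (a : ℂ) :
    ∫ x : ℝ, phi17 a x = ((2:ℂ)⁻¹) ^ (1/2 : ℂ) * Complex.exp (a^2 / (8*(π:ℂ))) := by
  have hb : ((-(2*(π:ℂ)))).re < 0 := by
    simp [pi_pos]
  have h := integral_cexp_quadratic hb a 0
  simp only [add_zero, zero_sub] at h
  unfold phi17
  rw [h]
  have hπ : ((π:ℂ)) ≠ 0 := Complex.ofReal_ne_zero.mpr pi_ne_zero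
  have e1 : ((π:ℂ) / - -(2 * (π:ℂ))) = (2:ℂ)⁻¹ := by
    field_simp
  have e2 : -(a ^ 2 / (4 * -(2 * (π:ℂ)))) = a^2 / (8*(π:ℂ)) := by
    rw [neg_div', div_eq_div_iff (by intro hc; apply hπ; linear_combination -hc/8) (by intro hc; apply hπ; linear_combination hc/8)]
    ring
  rw [e1, e2]

lemma int2d17 (w : ℂ) (k j l : ℕ) :
    Integrable (fun p : ℝ × ℝ =>
        ((p.1:ℂ) + p.2*Complex.I)^k * ((p.1:ℂ)^j * phi17 w p.1) * ((p.2:ℂ)^l * phi17 0 p.2))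
      (MeasureTheory.volume.prod MeasureTheory.volume) := by
  have h : ∀ p : ℝ × ℝ,
      ((p.1:ℂ) + p.2*Complex.I)^k * ((p.1:ℂ)^j * phi17 w p.1) * ((p.2:ℂ)^l * phi17 0 p.2)
      = ∑ m ∈ Finset.range (k+1),
          (((k.choose m : ℕ) : ℂ) * ((p.1:ℂ)^(m+j) * phi17 w p.1))
            * (Complex.I^(k-m) * ((p.2:ℂ)^((k-m)+l) * phi17 0 p.2)) := by
    intro p
    rw [add_pow, Finset.sum_mul, Finset.sum_mul]
    refine Finset.sum_congr rfl fun m _ => ?_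
    rw [pow_add, pow_add, mul_pow]
    ring
  have h2 : Integrable (fun p : ℝ × ℝ => ∑ m ∈ Finset.range (k+1),
      (((k.choose m : ℕ) : ℂ) * ((p.1:ℂ)^(m+j) * phi17 w p.1))
        * (Complex.I^(k-m) * ((p.2:ℂ)^((k-m)+l) * phi17 0 p.2)))
      (MeasureTheory.volume.prod MeasureTheory.volume) := by
    refine integrable_finset_sum _ fun m _ => ?_
    exact MeasureTheory.Integrable.mul_prod
      ((integrable_pow_phi17 (m+j) w).const_mul _)
      ((integrable_pow_phi17 ((k-m)+l) 0).const_mul _)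
  exact h2.congr (Filter.Eventually.of_forall fun p => (h p).symm)

open MeasureTheory in
lemma main17 (w : ℂ) (k : ℕ) :
    ∫ p : ℝ × ℝ, ((p.1:ℂ) + p.2*Complex.I)^k * phi17 w p.1 * phi17 0 p.2
        ∂(volume.prod volume)
      = (w/(4*(π:ℂ)))^k * ((2:ℂ)⁻¹ * Complex.exp (w^2 / (8*(π:ℂ)))) := by
  induction k with
  | zero =>
    simp only [pow_zero, one_mul]
    rw [MeasureTheory.integral_prod_mul (f := fun x : ℝ => phi17 w x) (g := fun y : ℝ => phi17 0 y)]
    rw [integral_phi17, integral_phi17]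
    have h0 : ((0:ℂ)^2 / (8*(π:ℂ))) = 0 := by simp
    rw [h0, Complex.exp_zero, mul_one]
    have hhalf : ((2:ℂ)⁻¹) ^ (1/2 : ℂ) * ((2:ℂ)⁻¹) ^ (1/2 : ℂ) = (2:ℂ)⁻¹ := by
      rw [← Complex.cpow_add _ _ (by norm_num : ((2:ℂ)⁻¹) ≠ 0)]
      norm_num
    linear_combination Complex.exp (w^2 / (8*(π:ℂ))) * hhalf
  | succ k ih =>
    have hπ : (4*(π:ℂ)) ≠ 0 := by
      simp [Real.pi_ne_zero]
    have hFk : Integrable (fun p : ℝ × ℝ =>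
        ((p.1:ℂ) + p.2*Complex.I)^k * phi17 w p.1 * phi17 0 p.2) (volume.prod volume) :=
      (int2d17 w k 0 0).congr (Filter.Eventually.of_forall fun p => by simp)
    have hFk1 : Integrable (fun p : ℝ × ℝ =>
        ((p.1:ℂ) + p.2*Complex.I)^(k-1) * phi17 w p.1 * phi17 0 p.2) (volume.prod volume) :=
      (int2d17 w (k-1) 0 0).congr (Filter.Eventually.of_forall fun p => by simp)
    have hG : Integrable (fun p : ℝ × ℝ =>
        ((p.1:ℂ) + p.2*Complex.I)^k * ((-(4*(π:ℂ))*p.1 + w) * phi17 w p.1) * phi17 0 p.2)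
        (volume.prod volume) := by
      have e : (fun p : ℝ × ℝ =>
          ((p.1:ℂ) + p.2*Complex.I)^k * ((-(4*(π:ℂ))*p.1 + w) * phi17 w p.1) * phi17 0 p.2)
          = fun p : ℝ × ℝ =>
            (-(4*(π:ℂ))) * (((p.1:ℂ) + p.2*Complex.I)^k * ((p.1:ℂ)^1 * phi17 w p.1)
              * ((p.2:ℂ)^0 * phi17 0 p.2))
            + w * (((p.1:ℂ) + p.2*Complex.I)^k * ((p.1:ℂ)^0 * phi17 w p.1)
              * ((p.2:ℂ)^0 * phi17 0 p.2)) := by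
        funext p; ring
      rw [e]
      exact ((int2d17 w k 1 0).const_mul _).add ((int2d17 w k 0 0).const_mul _)
    have hH : Integrable (fun p : ℝ × ℝ =>
        ((p.1:ℂ) + p.2*Complex.I)^k * phi17 w p.1 * ((-(4*(π:ℂ))*p.2 + 0) * phi17 0 p.2))
        (volume.prod volume) := by
      have e : (fun p : ℝ × ℝ =>
          ((p.1:ℂ) + p.2*Complex.I)^k * phi17 w p.1 * ((-(4*(π:ℂ))*p.2 + 0) * phi17 0 p.2))
          = fun p : ℝ × ℝ =>
            (-(4*(π:ℂ))) * (((p.1:ℂ) + p.2*Complex.I)^k * ((p.1:ℂ)^0 * phi17 w p.1)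
              * ((p.2:ℂ)^1 * phi17 0 p.2)) := by
        funext p; ring
      rw [e]
      exact (int2d17 w k 0 1).const_mul _
    have key : ∀ p : ℝ × ℝ,
        ((p.1:ℂ) + p.2*Complex.I)^(k+1) * phi17 w p.1 * phi17 0 p.2
        = (w/(4*(π:ℂ))) * (((p.1:ℂ) + p.2*Complex.I)^k * phi17 w p.1 * phi17 0 p.2)
          - (4*(π:ℂ))⁻¹ * (((p.1:ℂ) + p.2*Complex.I)^k * ((-(4*(π:ℂ))*p.1 + w) * phi17 w p.1)
              * phi17 0 p.2)
          - (Complex.I * (4*(π:ℂ))⁻¹) * (((p.1:ℂ) + p.2*Complex.I)^k * phi17 w p.1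
              * ((-(4*(π:ℂ))*p.2 + 0) * phi17 0 p.2)) := by
      intro p
      field_simp
      ring
    have hGval : (∫ p : ℝ × ℝ, ((p.1:ℂ) + p.2*Complex.I)^k
          * ((-(4*(π:ℂ))*p.1 + w) * phi17 w p.1) * phi17 0 p.2 ∂(volume.prod volume))
        = -((k:ℂ) * ∫ p : ℝ × ℝ, ((p.1:ℂ) + p.2*Complex.I)^(k-1) * phi17 w p.1 * phi17 0 p.2
            ∂(volume.prod volume)) := by
      rw [MeasureTheory.integral_prod_symm _ hG]
      have inner : ∀ y : ℝ, (∫ x : ℝ, ((x:ℂ) + y*Complex.I)^k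
            * ((-(4*(π:ℂ))*x + w) * phi17 w x) * phi17 0 y)
          = -(k:ℂ) * ∫ x : ℝ, ((x:ℂ) + y*Complex.I)^(k-1) * phi17 w x * phi17 0 y := by
        intro y
        rw [MeasureTheory.integral_mul_const, ibp_x17, MeasureTheory.integral_mul_const]
        ring
      simp_rw [inner]
      rw [MeasureTheory.integral_const_mul, ← MeasureTheory.integral_prod_symm _ hFk1]
      ring
    have hHval : (∫ p : ℝ × ℝ, ((p.1:ℂ) + p.2*Complex.I)^k * phi17 w p.1
          * ((-(4*(π:ℂ))*p.2 + 0) * phi17 0 p.2) ∂(volume.prod volume))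
        = -((k:ℂ) * Complex.I * ∫ p : ℝ × ℝ, ((p.1:ℂ) + p.2*Complex.I)^(k-1) * phi17 w p.1
            * phi17 0 p.2 ∂(volume.prod volume)) := by
      rw [MeasureTheory.integral_prod _ hH]
      have inner : ∀ x : ℝ, (∫ y : ℝ, ((x:ℂ) + y*Complex.I)^k * phi17 w x
            * ((-(4*(π:ℂ))*y + 0) * phi17 0 y))
          = -((k:ℂ) * Complex.I) * ∫ y : ℝ, ((x:ℂ) + y*Complex.I)^(k-1) * phi17 w x * phi17 0 y := by
        intro x
        calc (∫ y : ℝ, ((x:ℂ) + y*Complex.I)^k * phi17 w x * ((-(4*(π:ℂ))*y + 0) * phi17 0 y))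
            = ∫ y : ℝ, (((x:ℂ) + y*Complex.I)^k * ((-(4*(π:ℂ))*y + 0) * phi17 0 y)) * phi17 w x :=
              integral_congr_ae (Filter.Eventually.of_forall fun y => by ring)
          _ = (∫ y : ℝ, ((x:ℂ) + y*Complex.I)^k * ((-(4*(π:ℂ))*y + 0) * phi17 0 y)) * phi17 w x :=
              MeasureTheory.integral_mul_const _ _
          _ = (-((k:ℂ) * Complex.I * ∫ y : ℝ, ((x:ℂ) + y*Complex.I)^(k-1) * phi17 0 y))
                * phi17 w x := by rw [ibp_y17]
          _ = -((k:ℂ) * Complex.I)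
                * ((∫ y : ℝ, ((x:ℂ) + y*Complex.I)^(k-1) * phi17 0 y) * phi17 w x) := by ring
          _ = -((k:ℂ) * Complex.I)
                * (∫ y : ℝ, (((x:ℂ) + y*Complex.I)^(k-1) * phi17 0 y) * phi17 w x) := by
              rw [MeasureTheory.integral_mul_const]
          _ = -((k:ℂ) * Complex.I)
                * (∫ y : ℝ, ((x:ℂ) + y*Complex.I)^(k-1) * phi17 w x * phi17 0 y) := by
              congr 1
              exact integral_congr_ae (Filter.Eventually.of_forall fun y => by ring)
      simp_rw [inner]
      rw [MeasureTheory.integral_const_mul, ← MeasureTheory.integral_prod _ hFk1]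
      ring
    calc (∫ p : ℝ × ℝ, ((p.1:ℂ) + p.2*Complex.I)^(k+1) * phi17 w p.1 * phi17 0 p.2
            ∂(volume.prod volume))
        = ∫ p : ℝ × ℝ,
            ((w/(4*(π:ℂ))) * (((p.1:ℂ) + p.2*Complex.I)^k * phi17 w p.1 * phi17 0 p.2)
            - (4*(π:ℂ))⁻¹ * (((p.1:ℂ) + p.2*Complex.I)^k
                * ((-(4*(π:ℂ))*p.1 + w) * phi17 w p.1) * phi17 0 p.2)
            - (Complex.I * (4*(π:ℂ))⁻¹) * (((p.1:ℂ) + p.2*Complex.I)^k * phi17 w p.1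
                * ((-(4*(π:ℂ))*p.2 + 0) * phi17 0 p.2))) ∂(volume.prod volume) :=
          integral_congr_ae (Filter.Eventually.of_forall fun p => key p)
      _ = (w/(4*(π:ℂ))) * (∫ p : ℝ × ℝ, ((p.1:ℂ) + p.2*Complex.I)^k * phi17 w p.1 * phi17 0 p.2
              ∂(volume.prod volume))
          - (4*(π:ℂ))⁻¹ * (∫ p : ℝ × ℝ, ((p.1:ℂ) + p.2*Complex.I)^k
              * ((-(4*(π:ℂ))*p.1 + w) * phi17 w p.1) * phi17 0 p.2 ∂(volume.prod volume))
          - (Complex.I * (4*(π:ℂ))⁻¹) * (∫ p : ℝ × ℝ, ((p.1:ℂ) + p.2*Complex.I)^k * phi17 w p.1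
              * ((-(4*(π:ℂ))*p.2 + 0) * phi17 0 p.2) ∂(volume.prod volume)) := by
          have hA : Integrable (fun p : ℝ × ℝ =>
              (w/(4*(π:ℂ))) * (((p.1:ℂ) + p.2*Complex.I)^k * phi17 w p.1 * phi17 0 p.2))
              (volume.prod volume) := hFk.const_mul _
          have hB : Integrable (fun p : ℝ × ℝ =>
              (4*(π:ℂ))⁻¹ * (((p.1:ℂ) + p.2*Complex.I)^k
                * ((-(4*(π:ℂ))*p.1 + w) * phi17 w p.1) * phi17 0 p.2))
              (volume.prod volume) := hG.const_mul _
          have hC : Integrable (fun p : ℝ × ℝ =>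
              (Complex.I * (4*(π:ℂ))⁻¹) * (((p.1:ℂ) + p.2*Complex.I)^k * phi17 w p.1
                * ((-(4*(π:ℂ))*p.2 + 0) * phi17 0 p.2)))
              (volume.prod volume) := hH.const_mul _
          have hAB : Integrable (fun p : ℝ × ℝ =>
              (w/(4*(π:ℂ))) * (((p.1:ℂ) + p.2*Complex.I)^k * phi17 w p.1 * phi17 0 p.2)
              - (4*(π:ℂ))⁻¹ * (((p.1:ℂ) + p.2*Complex.I)^k
                * ((-(4*(π:ℂ))*p.1 + w) * phi17 w p.1) * phi17 0 p.2))
              (volume.prod volume) := hA.sub hB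
          rw [MeasureTheory.integral_sub hAB hC,
            MeasureTheory.integral_sub hA hB,
            MeasureTheory.integral_const_mul, MeasureTheory.integral_const_mul,
            MeasureTheory.integral_const_mul]
      _ = (w/(4*(π:ℂ)))^(k+1) * ((2:ℂ)⁻¹ * Complex.exp (w^2 / (8*(π:ℂ)))) := by
          rw [hGval, hHval, ih]
          linear_combination ((4*(π:ℂ))⁻¹ * (k:ℂ)
            * (∫ p : ℝ × ℝ, ((p.1:ℂ) + p.2*Complex.I)^(k-1) * phi17 w p.1 * phi17 0 p.2
                ∂(volume.prod volume))) * Complex.I_sq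

/-- The complex Gaussian integral: for `ε ∈ {1,-1}`, `c ∈ ℝ` and `k ∈ ℕ`,
`∫_{ℝ²} (x+iy)^k e^{-2π(x²+y²) - 2πεic·2x} · 2 dx dy = (-εic)^k e^{-2πc²}`;
i.e. `∫_ℂ z^k e^{-2π|z|²} ψ_{-ε}(cz) d_ℂz = (-εic)^k e^{-2πc²}` where
`ψ_ε(z) = exp(2πεi(z+z̄))` and `d_ℂz = 2dxdy`. -/
theorem statement17 (ε : ℝ) (hε : ε = 1 ∨ ε = -1) (c : ℝ) (k : ℕ) :
    ∫ x : ℝ, ∫ y : ℝ,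
        ((x : ℂ) + (y : ℂ) * Complex.I) ^ k *
          Complex.exp (-2 * (Real.pi : ℂ) * ((x : ℂ) ^ 2 + (y : ℂ) ^ 2) -
            2 * (Real.pi : ℂ) * (ε : ℂ) * Complex.I * (c : ℂ) * (2 * (x : ℂ))) * 2 =
      (-(ε : ℂ) * Complex.I * (c : ℂ)) ^ k * Complex.exp (-2 * (Real.pi : ℂ) * (c : ℂ) ^ 2) := by
  have hπ : ((π:ℂ)) ≠ 0 := Complex.ofReal_ne_zero.mpr Real.pi_ne_zero
  set w : ℂ := -(4*(π:ℂ)) * ε * Complex.I * c with hw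
  have hint : ∀ x y : ℝ, ((x:ℂ) + (y:ℂ)*Complex.I)^k *
        Complex.exp (-2 * (π:ℂ) * ((x:ℂ)^2 + (y:ℂ)^2) -
          2 * (π:ℂ) * (ε:ℂ) * Complex.I * (c:ℂ) * (2 * (x:ℂ)))
      = ((x:ℂ) + (y:ℂ)*Complex.I)^k * phi17 w x * phi17 0 y := by
    intro x y
    unfold phi17
    conv_rhs => rw [mul_assoc, ← Complex.exp_add]
    congr 2
    rw [hw]
    ring
  have hI : Integrable (fun p : ℝ × ℝ =>
      ((p.1:ℂ) + p.2*Complex.I)^k * phi17 w p.1 * phi17 0 p.2)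
      (MeasureTheory.volume.prod MeasureTheory.volume) :=
    (int2d17 w k 0 0).congr (Filter.Eventually.of_forall fun p => by simp)
  calc ∫ x : ℝ, ∫ y : ℝ,
        ((x : ℂ) + (y : ℂ) * Complex.I) ^ k *
          Complex.exp (-2 * (Real.pi : ℂ) * ((x : ℂ) ^ 2 + (y : ℂ) ^ 2) -
            2 * (Real.pi : ℂ) * (ε : ℂ) * Complex.I * (c : ℂ) * (2 * (x : ℂ))) * 2
      = (∫ x : ℝ, ∫ y : ℝ, ((x:ℂ) + (y:ℂ)*Complex.I)^k * phi17 w x * phi17 0 y) * 2 := by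
        simp_rw [MeasureTheory.integral_mul_const, hint]
    _ = (∫ p : ℝ × ℝ, ((p.1:ℂ) + p.2*Complex.I)^k * phi17 w p.1 * phi17 0 p.2
          ∂(MeasureTheory.volume.prod MeasureTheory.volume)) * 2 := by
        rw [MeasureTheory.integral_integral
          (f := fun (x y : ℝ) => ((x:ℂ) + (y:ℂ)*Complex.I)^k * phi17 w x * phi17 0 y) hI]
    _ = ((w/(4*(π:ℂ)))^k * ((2:ℂ)⁻¹ * Complex.exp (w^2 / (8*(π:ℂ))))) * 2 := by
        rw [main17]
    _ = (-(ε : ℂ) * Complex.I * (c : ℂ)) ^ k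
          * Complex.exp (-2 * (Real.pi : ℂ) * (c : ℂ) ^ 2) := by
        have hε2 : ((ε:ℝ):ℂ)^2 = 1 := by
          rcases hε with h|h <;> rw [h] <;> norm_num
        have e1 : w/(4*(π:ℂ)) = -(ε:ℂ) * Complex.I * (c:ℂ) := by
          rw [hw]
          field_simp
        have e2 : w^2 / (8*(π:ℂ)) = -2 * (π:ℂ) * (c:ℂ)^2 := by
          rw [hw, div_eq_iff (by intro hcon; apply hπ; linear_combination hcon/8)]
          linear_combination (16*(π:ℂ)^2*(c:ℂ)^2*Complex.I^2) * hε2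
            + (16*(π:ℂ)^2*(c:ℂ)^2) * Complex.I_sq
        rw [e1, e2]
        ring
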